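/- The restriction of F to [0,1]^n is Lipschitz with constant 1 - μ + β·ρ(R) for the Euclidean norm: for all x, y ∈ [0,1]^n, ‖F(x) - F(y)‖₂ ≤ (1 - μ + β·ρ(R))·‖x - y‖₂. In particular, if β < β₀ then F is a contraction on [0,1]^n. -/

import Mathlib

open Filter Finset

/-- The MMCA map `F`. -/
noncomputable def F {n : ℕ} (R : Matrix (Fin n) (Fin n) ℝ) (β μ : ℝ) (x : Fin n → ℝ) :
    Fin n → ℝ :=
  fun i => 1 - (1 - (1 - μ) * x i) * ∏ j, (1 - β * R i j * x j)

/-- Irreducibility of a (nonnegative) square matrix. -/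
def MatIrred {n : ℕ} (R : Matrix (Fin n) (Fin n) ℝ) : Prop :=
  ∀ i j : Fin n, ∃ k : ℕ, 0 < k ∧ (R ^ k) i j ≠ 0

/-- Spectral radius of a real matrix, as the supremum of the absolute values of the
real spectrum (appropriate here since `R` is symmetric). -/
noncomputable def specRad {n : ℕ} (R : Matrix (Fin n) (Fin n) ℝ) : ℝ :=
  sSup {r : ℝ | ∃ z ∈ spectrum ℝ R, |z| = r}

/-- Telescoping bound for differences of products of numbers in `[0,1]`. -/
lemma abs_prod_sub_prod_le {ι : Type*} (s : Finset ι) (f g : ι → ℝ)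
    (hf0 : ∀ i ∈ s, 0 ≤ f i) (hf1 : ∀ i ∈ s, f i ≤ 1)
    (hg0 : ∀ i ∈ s, 0 ≤ g i) (hg1 : ∀ i ∈ s, g i ≤ 1) :
    |∏ i ∈ s, f i - ∏ i ∈ s, g i| ≤ ∑ i ∈ s, |f i - g i| := by
  induction s using Finset.cons_induction with
  | empty => simp
  | cons a s ha ih =>
    rw [Finset.prod_cons, Finset.prod_cons, Finset.sum_cons]
    have hmem : ∀ i ∈ s, i ∈ Finset.cons a s ha := fun i hi => Finset.mem_cons_of_mem hi
    have hPf0 : 0 ≤ ∏ i ∈ s, f i := Finset.prod_nonneg fun i hi => hf0 i (hmem i hi)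
    have hPf1 : ∏ i ∈ s, f i ≤ 1 := Finset.prod_le_one (fun i hi => hf0 i (hmem i hi))
      (fun i hi => hf1 i (hmem i hi))
    have hga0 : 0 ≤ g a := hg0 a (Finset.mem_cons_self a s)
    have hga1 : g a ≤ 1 := hg1 a (Finset.mem_cons_self a s)
    have ih' := ih (fun i hi => hf0 i (hmem i hi)) (fun i hi => hf1 i (hmem i hi))
      (fun i hi => hg0 i (hmem i hi)) (fun i hi => hg1 i (hmem i hi))
    have h1 : f a * ∏ i ∈ s, f i - g a * ∏ i ∈ s, g i
        = (f a - g a) * ∏ i ∈ s, f i + g a * (∏ i ∈ s, f i - ∏ i ∈ s, g i) := by ring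
    rw [h1]
    calc |(f a - g a) * ∏ i ∈ s, f i + g a * (∏ i ∈ s, f i - ∏ i ∈ s, g i)|
        ≤ |(f a - g a) * ∏ i ∈ s, f i| + |g a * (∏ i ∈ s, f i - ∏ i ∈ s, g i)| := abs_add_le _ _
      _ = |f a - g a| * |∏ i ∈ s, f i| + |g a| * |∏ i ∈ s, f i - ∏ i ∈ s, g i| := by
          rw [abs_mul, abs_mul]
      _ ≤ |f a - g a| * 1 + 1 * ∑ i ∈ s, |f i - g i| := by
          gcongr
          · rw [abs_of_nonneg hPf0]; exact hPf1
          · rw [abs_of_nonneg hga0]; exact hga1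
      _ = |f a - g a| + ∑ i ∈ s, |f i - g i| := by ring

/-- The Euclidean norm of a plain vector, via `EuclideanSpace`. -/
lemma euclid_norm {n : ℕ} (z : EuclideanSpace ℝ (Fin n)) :
    ‖z‖ = Real.sqrt (∑ i, (z i) ^ 2) := by
  rw [EuclideanSpace.norm_eq]
  congr 1
  refine Finset.sum_congr rfl fun i _ => ?_
  rw [Real.norm_eq_abs, sq_abs]

/-- Spectral bound: for a symmetric matrix, `‖R v‖₂ ≤ specRad R * ‖v‖₂`. -/
lemma mulVec_sqrt_le {n : ℕ} (hn : 0 < n) (R : Matrix (Fin n) (Fin n) ℝ)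
    (hsymm : R.IsSymm) (v : Fin n → ℝ) :
    Real.sqrt (∑ i, (R.mulVec v i) ^ 2) ≤ specRad R * Real.sqrt (∑ i, (v i) ^ 2) := by
  haveI : Nonempty (Fin n) := Fin.pos_iff_nonempty.mp hn
  have hH : R.IsHermitian := by
    rw [Matrix.IsHermitian, Matrix.conjTranspose_eq_transpose_of_trivial]; exact hsymm
  set e := hH.eigenvectorBasis with he
  set d := hH.eigenvalues with hd
  have hBdd : BddAbove {r : ℝ | ∃ z ∈ spectrum ℝ R, |z| = r} := by
    have hset : {r : ℝ | ∃ z ∈ spectrum ℝ R, |z| = r} = (fun z => |z|) '' spectrum ℝ R := by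
      ext r; simp [Set.mem_image]
    rw [hset]
    exact ((R.finite_spectrum).image _).bddAbove
  have habs : ∀ i, |d i| ≤ specRad R := fun i =>
    le_csSup hBdd ⟨d i, hH.eigenvalues_mem_spectrum_real i, rfl⟩
  have hρ : 0 ≤ specRad R := le_trans (abs_nonneg _) (habs (Classical.arbitrary _))
  set V : EuclideanSpace ℝ (Fin n) := (WithLp.equiv 2 (Fin n → ℝ)).symm v with hV
  set W : EuclideanSpace ℝ (Fin n) := (WithLp.equiv 2 (Fin n → ℝ)).symm (R.mulVec v) with hW
  have hsy : ∀ a b, R a b = R b a := by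
    intro a b
    conv_lhs => rw [← hsymm]
    rfl
  have hRe : ∀ i k, ∑ j, R k j * (e i) j = d i * (e i) k := by
    intro i k
    have h := congrFun (hH.mulVec_eigenvectorBasis i) k
    simpa [Matrix.mulVec, dotProduct] using h
  have key : ∀ i, e.repr W i = d i * e.repr V i := by
    intro i
    rw [OrthonormalBasis.repr_apply_apply, OrthonormalBasis.repr_apply_apply]
    simp only [PiLp.inner_apply, RCLike.inner_apply, conj_trivial]
    have hWj : ∀ j, W j = R.mulVec v j := fun j => rfl
    have hVj : ∀ j, V j = v j := fun j => rfl
    simp only [hWj, hVj]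
    rw [Finset.sum_congr rfl (fun j _ => mul_comm (R.mulVec v j) (e i j)),
      Finset.sum_congr rfl (fun k _ => mul_comm (v k) (e i k))]
    calc ∑ j, e i j * R.mulVec v j
        = ∑ j, ∑ k, e i j * (R j k * v k) := by
          simp [Matrix.mulVec, dotProduct, Finset.mul_sum]
      _ = ∑ k, ∑ j, e i j * (R j k * v k) := Finset.sum_comm
      _ = ∑ k, (∑ j, R k j * e i j) * v k := by
          refine Finset.sum_congr rfl fun k _ => ?_
          rw [Finset.sum_mul]
          refine Finset.sum_congr rfl fun j _ => ?_
          rw [hsy k j]; ring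
      _ = ∑ k, d i * (e i k * v k) := by
          refine Finset.sum_congr rfl fun k _ => ?_
          rw [hRe i k]; ring
      _ = d i * ∑ k, e i k * v k := (Finset.mul_sum _ _ _).symm
  have hnW : Real.sqrt (∑ i, (R.mulVec v i) ^ 2) = ‖W‖ := by
    rw [euclid_norm]; rfl
  have hnV : Real.sqrt (∑ i, (v i) ^ 2) = ‖V‖ := by
    rw [euclid_norm]; rfl
  rw [hnW, hnV, ← e.repr.norm_map W, ← e.repr.norm_map V, euclid_norm, euclid_norm]
  have hsum : ∑ i, (e.repr W i) ^ 2 ≤ specRad R ^ 2 * ∑ i, (e.repr V i) ^ 2 := by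
    rw [Finset.mul_sum]
    refine Finset.sum_le_sum fun i _ => ?_
    rw [key i, mul_pow]
    have hd2 : d i ^ 2 ≤ specRad R ^ 2 := by
      rw [← sq_abs (d i)]
      exact pow_le_pow_left₀ (abs_nonneg _) (habs i) 2
    exact mul_le_mul_of_nonneg_right hd2 (sq_nonneg _)
  calc Real.sqrt (∑ i, (e.repr W i) ^ 2)
      ≤ Real.sqrt (specRad R ^ 2 * ∑ i, (e.repr V i) ^ 2) := Real.sqrt_le_sqrt hsum
    _ = specRad R * Real.sqrt (∑ i, (e.repr V i) ^ 2) := by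
        rw [Real.sqrt_mul (sq_nonneg _), Real.sqrt_sq hρ]

/-- Pointwise Lipschitz estimate for `F`. -/
lemma pointwise_bound {n : ℕ} (R : Matrix (Fin n) (Fin n) ℝ)
    (hR : ∀ i j, R i j ∈ Set.Icc (0:ℝ) 1)
    (β μ : ℝ) (hβ : β ∈ Set.Ioo (0:ℝ) 1) (hμ : μ ∈ Set.Ioo (0:ℝ) 1)
    (x y : Fin n → ℝ) (hx : ∀ i, x i ∈ Set.Icc (0:ℝ) 1) (hy : ∀ i, y i ∈ Set.Icc (0:ℝ) 1)
    (i : Fin n) :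
    |F R β μ x i - F R β μ y i|
      ≤ (1 - μ) * |x i - y i| + β * ∑ j, R i j * |x j - y j| := by
  obtain ⟨hβ0, hβ1⟩ := hβ
  obtain ⟨hμ0, hμ1⟩ := hμ
  have hfac : ∀ (c t : ℝ), 0 ≤ c → c ≤ 1 → 0 ≤ t → t ≤ 1 → 0 ≤ 1 - c * t ∧ 1 - c * t ≤ 1 := by
    intro c t hc0 hc1 ht0 ht1
    constructor <;> nlinarith
  set A := 1 - (1 - μ) * x i with hA
  set C := 1 - (1 - μ) * y i with hC
  set B := ∏ j, (1 - β * R i j * x j) with hB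
  set D := ∏ j, (1 - β * R i j * y j) with hD
  have hfx : ∀ j, 0 ≤ 1 - β * R i j * x j ∧ 1 - β * R i j * x j ≤ 1 := fun j =>
    hfac (β * R i j) (x j) (mul_nonneg hβ0.le (hR i j).1)
      (by nlinarith [(hR i j).1, (hR i j).2]) (hx j).1 (hx j).2
  have hfy : ∀ j, 0 ≤ 1 - β * R i j * y j ∧ 1 - β * R i j * y j ≤ 1 := fun j =>
    hfac (β * R i j) (y j) (mul_nonneg hβ0.le (hR i j).1)
      (by nlinarith [(hR i j).1, (hR i j).2]) (hy j).1 (hy j).2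
  have hB0 : 0 ≤ B := Finset.prod_nonneg fun j _ => (hfx j).1
  have hB1 : B ≤ 1 := Finset.prod_le_one (fun j _ => (hfx j).1) (fun j _ => (hfx j).2)
  have hC0 : 0 ≤ C := by
    have := hy i; rw [hC]; nlinarith [(hy i).1, (hy i).2]
  have hC1 : C ≤ 1 := by
    rw [hC]; nlinarith [(hy i).1]
  have hdiff : F R β μ x i - F R β μ y i = C * D - A * B := by
    rw [hA, hB, hC, hD]; simp only [F]; ring
  rw [hdiff]
  have hBD : |B - D| ≤ β * ∑ j, R i j * |x j - y j| := by
    have h := abs_prod_sub_prod_le Finset.univ (fun j => 1 - β * R i j * x j)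
      (fun j => 1 - β * R i j * y j) (fun j _ => (hfx j).1) (fun j _ => (hfx j).2)
      (fun j _ => (hfy j).1) (fun j _ => (hfy j).2)
    rw [hB, hD]
    refine le_trans h ?_
    rw [Finset.mul_sum]
    refine Finset.sum_le_sum fun j _ => ?_
    have e1 : (1 - β * R i j * x j) - (1 - β * R i j * y j) = β * R i j * (y j - x j) := by
      ring
    rw [e1, abs_mul, abs_mul, abs_of_nonneg hβ0.le, abs_of_nonneg (hR i j).1, abs_sub_comm]
    exact le_of_eq (by ring)
  have hAC : |A - C| = (1 - μ) * |x i - y i| := by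
    have : A - C = (1 - μ) * (y i - x i) := by rw [hA, hC]; ring
    rw [this, abs_mul, abs_of_nonneg (by linarith : (0:ℝ) ≤ 1 - μ), abs_sub_comm]
  calc |C * D - A * B| = |(C - A) * D + A * (D - B)| := by ring_nf
    _ ≤ |(C - A) * D| + |A * (D - B)| := abs_add_le _ _
    _ = |C - A| * |D| + |A| * |D - B| := by rw [abs_mul, abs_mul]
    _ ≤ |C - A| * 1 + 1 * |D - B| := by
        gcongr
        · rw [abs_of_nonneg (Finset.prod_nonneg fun j _ => (hfy j).1)]
          exact Finset.prod_le_one (fun j _ => (hfy j).1) (fun j _ => (hfy j).2)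
        · rw [abs_of_nonneg (by rw [hA]; nlinarith [(hx i).1, (hx i).2] : (0:ℝ) ≤ A)]
          rw [hA]; nlinarith [(hx i).1]
    _ = |A - C| + |B - D| := by rw [abs_sub_comm C A, abs_sub_comm D B]; ring
    _ ≤ (1 - μ) * |x i - y i| + β * ∑ j, R i j * |x j - y j| := by
        rw [hAC]; linarith [hBD]

theorem lipschitz_euclidean (n : ℕ) (hn : 2 ≤ n) (R : Matrix (Fin n) (Fin n) ℝ)
    (hsymm : R.IsSymm) (hR : ∀ i j, R i j ∈ Set.Icc (0:ℝ) 1)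
    (hdiag : ∀ i, R i i = 0) (hirr : MatIrred R)
    (β μ : ℝ) (hβ : β ∈ Set.Ioo (0:ℝ) 1) (hμ : μ ∈ Set.Ioo (0:ℝ) 1) :
    (∀ x y : Fin n → ℝ, (∀ i, x i ∈ Set.Icc (0:ℝ) 1) → (∀ i, y i ∈ Set.Icc (0:ℝ) 1) →
      Real.sqrt (∑ i, (F R β μ x i - F R β μ y i) ^ 2)
        ≤ (1 - μ + β * specRad R) * Real.sqrt (∑ i, (x i - y i) ^ 2)) ∧
    (β < μ / specRad R → 1 - μ + β * specRad R < 1) := by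
  have hn0 : 0 < n := by omega
  constructor
  · intro x y hx hy
    set v : Fin n → ℝ := fun i => |x i - y i| with hv
    have hv0 : ∀ i, 0 ≤ v i := fun i => abs_nonneg _
    have hRv0 : ∀ i, 0 ≤ R.mulVec v i := by
      intro i
      have hmv : R.mulVec v i = ∑ j, R i j * v j := rfl
      rw [hmv]
      exact Finset.sum_nonneg fun j _ => mul_nonneg (hR i j).1 (hv0 j)
    set u : Fin n → ℝ := fun i => (1 - μ) * v i + β * R.mulVec v i with hu
    have hu0 : ∀ i, 0 ≤ u i := fun i =>
      add_nonneg (mul_nonneg (by linarith [hμ.2]) (hv0 i))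
        (mul_nonneg hβ.1.le (hRv0 i))
    have hpt : ∀ i, |F R β μ x i - F R β μ y i| ≤ u i := by
      intro i
      have := pointwise_bound R hR β μ hβ hμ x y hx hy i
      simpa [hu, Matrix.mulVec, dotProduct, hv] using this
    have step1 : Real.sqrt (∑ i, (F R β μ x i - F R β μ y i) ^ 2)
        ≤ Real.sqrt (∑ i, (u i) ^ 2) := by
      refine Real.sqrt_le_sqrt (Finset.sum_le_sum fun i _ => ?_)
      have h := abs_le.mp (hpt i)
      exact sq_le_sq' (by linarith [h.1]) h.2
    -- triangle inequality in EuclideanSpace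
    set V : EuclideanSpace ℝ (Fin n) := (WithLp.equiv 2 (Fin n → ℝ)).symm v with hV
    set W : EuclideanSpace ℝ (Fin n) := (WithLp.equiv 2 (Fin n → ℝ)).symm (R.mulVec v) with hW
    set U : EuclideanSpace ℝ (Fin n) := (WithLp.equiv 2 (Fin n → ℝ)).symm u with hU
    have hUeq : U = (1 - μ) • V + β • W := by
      ext i; simp [hU, hV, hW, hu]
    have step2 : Real.sqrt (∑ i, (u i) ^ 2)
        ≤ (1 - μ) * Real.sqrt (∑ i, (v i) ^ 2)
          + β * Real.sqrt (∑ i, (R.mulVec v i) ^ 2) := by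
      have h1 : Real.sqrt (∑ i, (u i) ^ 2) = ‖U‖ := by rw [euclid_norm]; rfl
      have h2 : Real.sqrt (∑ i, (v i) ^ 2) = ‖V‖ := by rw [euclid_norm]; rfl
      have h3 : Real.sqrt (∑ i, (R.mulVec v i) ^ 2) = ‖W‖ := by rw [euclid_norm]; rfl
      rw [h1, h2, h3, hUeq]
      calc ‖(1 - μ) • V + β • W‖ ≤ ‖(1 - μ) • V‖ + ‖β • W‖ := norm_add_le _ _
        _ = (1 - μ) * ‖V‖ + β * ‖W‖ := by
            rw [norm_smul, norm_smul, Real.norm_eq_abs, Real.norm_eq_abs,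
              abs_of_nonneg (by linarith [hμ.2] : (0:ℝ) ≤ 1 - μ), abs_of_nonneg hβ.1.le]
    have step3 : Real.sqrt (∑ i, (R.mulVec v i) ^ 2)
        ≤ specRad R * Real.sqrt (∑ i, (v i) ^ 2) := mulVec_sqrt_le hn0 R hsymm v
    have hvx : ∑ i, (v i) ^ 2 = ∑ i, (x i - y i) ^ 2 := by
      refine Finset.sum_congr rfl fun i _ => ?_
      rw [hv]; exact sq_abs _
    calc Real.sqrt (∑ i, (F R β μ x i - F R β μ y i) ^ 2)
        ≤ Real.sqrt (∑ i, (u i) ^ 2) := step1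
      _ ≤ (1 - μ) * Real.sqrt (∑ i, (v i) ^ 2) + β * Real.sqrt (∑ i, (R.mulVec v i) ^ 2) := step2
      _ ≤ (1 - μ) * Real.sqrt (∑ i, (v i) ^ 2)
          + β * (specRad R * Real.sqrt (∑ i, (v i) ^ 2)) := by
          gcongr
          exact hβ.1.le
      _ = (1 - μ + β * specRad R) * Real.sqrt (∑ i, (v i) ^ 2) := by ring
      _ = (1 - μ + β * specRad R) * Real.sqrt (∑ i, (x i - y i) ^ 2) := by rw [hvx]
  · intro h
    have hρpos : 0 < specRad R := by
      by_contra hle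
      push_neg at hle
      have h1 : μ / specRad R ≤ 0 := div_nonpos_of_nonneg_of_nonpos hμ.1.le hle
      linarith [hβ.1]
    have h2 : β * specRad R < μ := (lt_div_iff₀ hρpos).mp h
    linarith
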